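/- Let H = (V,E,w) be an edge-weighted hypergraph and let f ∈ ℝ^V be a nonzero vector with f_u ≥ 0 for all u ∈ V. Then there exists a nonempty set S ⊆ supp(f) such that φ(S) ≤ (Σ_{e ∈ E} w_e · max_{u,v ∈ e} |f_u − f_v|) / (Σ_{u ∈ V} w_u f_u). -/

import Mathlib

open Finset

/-- An edge-weighted hypergraph on a finite vertex set `V`: a finite set of hyperedges,
each a nonempty subset of `V`, with positive weights. -/
structure WHypergraph (V : Type*) [Fintype V] [DecidableEq V] where
  E : Finset (Finset V)
  w : Finset V → ℝ
  edge_nonempty : ∀ e ∈ E, e.Nonempty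
  w_pos : ∀ e ∈ E, 0 < w e

namespace WHypergraph

variable {V : Type*} [Fintype V] [DecidableEq V]

/-- The weight of a vertex: total weight of hyperedges containing it. -/
noncomputable def wv (H : WHypergraph V) (v : V) : ℝ :=
  ∑ e ∈ H.E.filter (fun e => v ∈ e), H.w e

/-- The weight of a set of vertices. -/
noncomputable def wS (H : WHypergraph V) (S : Finset V) : ℝ := ∑ v ∈ S, H.wv v

/-- The boundary of `S`: hyperedges meeting both `S` and its complement. -/
noncomputable def bdry (H : WHypergraph V) (S : Finset V) : Finset (Finset V) :=
  H.E.filter (fun e => (e ∩ S).Nonempty ∧ (e \ S).Nonempty)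

/-- The expansion `φ(S)` of a set of vertices. -/
noncomputable def phi (H : WHypergraph V) (S : Finset V) : ℝ :=
  (∑ e ∈ H.bdry S, H.w e) / H.wS S

/-- `max_{u,v ∈ e} (f u - f v)^2`. -/
noncomputable def edgeDisc (H : WHypergraph V) (f : V → ℝ) (e : Finset V) : ℝ :=
  sSup {x : ℝ | ∃ u ∈ e, ∃ v ∈ e, (f u - f v) ^ 2 = x}

/-- The discrepancy ratio `D_w(f)`. -/
noncomputable def disc (H : WHypergraph V) (f : V → ℝ) : ℝ :=
  (∑ e ∈ H.E, H.w e * H.edgeDisc f e) / ∑ u : V, H.wv u * f u ^ 2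

/-- The weighted inner product `⟨f,g⟩_w`. -/
noncomputable def wip (H : WHypergraph V) (f g : V → ℝ) : ℝ :=
  ∑ u : V, H.wv u * f u * g u

/-- `γ₂`: infimum of the discrepancy ratio over nonzero `f ⊥_w 1`. -/
noncomputable def gamma2 (H : WHypergraph V) : ℝ :=
  sInf {x : ℝ | ∃ f : V → ℝ, f ≠ 0 ∧ H.wip f (fun _ => 1) = 0 ∧ H.disc f = x}

/-- The hypergraph expansion `φ_H`. -/
noncomputable def phiH (H : WHypergraph V) : ℝ :=
  sInf {x : ℝ | ∃ S : Finset V, S.Nonempty ∧ S ≠ univ ∧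
    x = max (H.phi S) (H.phi Sᶜ)}

/-- `ζ_k`: inf over `k`-tuples of nonzero pairwise `w`-orthogonal vectors of the
sup of the discrepancy ratio over nonzero vectors in their span. -/
noncomputable def zeta (H : WHypergraph V) (k : ℕ) : ℝ :=
  sInf {x : ℝ | ∃ f : Fin k → V → ℝ, (∀ i, f i ≠ 0) ∧
    (∀ i j, i ≠ j → H.wip (f i) (f j) = 0) ∧
    x = sSup {y : ℝ | ∃ h : V → ℝ, h ≠ 0 ∧
      h ∈ Submodule.span ℝ (Set.range f) ∧ H.disc h = y}}

/-- `ξ_k`: inf over `k`-tuples of nonzero pairwise `w`-orthogonal vectors of the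
maximum discrepancy ratio among them. -/
noncomputable def xi (H : WHypergraph V) (k : ℕ) : ℝ :=
  sInf {x : ℝ | ∃ f : Fin k → V → ℝ, (∀ i, f i ≠ 0) ∧
    (∀ i j, i ≠ j → H.wip (f i) (f j) = 0) ∧
    x = sSup {y : ℝ | ∃ i, H.disc (f i) = y}}

/-- A sequence of procedural minimizers: `f 0` is a nonzero constant vector, each `f i`
is nonzero and `w`-orthogonal to the previous ones, and attains the infimum of the
discrepancy ratio over nonzero vectors `w`-orthogonal to the previous ones. -/
def IsProcMin (H : WHypergraph V) {k : ℕ} (f : Fin k → V → ℝ) : Prop :=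
  (∀ i, f i ≠ 0) ∧
  (∀ i : Fin k, (i : ℕ) = 0 → ∃ c : ℝ, f i = fun _ => c) ∧
  (∀ i j : Fin k, (j : ℕ) < (i : ℕ) → H.wip (f i) (f j) = 0) ∧
  (∀ i : Fin k, 0 < (i : ℕ) → H.disc (f i) =
    sInf {x : ℝ | ∃ g : V → ℝ, g ≠ 0 ∧
      (∀ j : Fin k, (j : ℕ) < (i : ℕ) → H.wip g (f j) = 0) ∧ H.disc g = x})

end WHypergraph


private lemma avg_ratio {ι : Type*} (s : Finset ι) (hs : s.Nonempty)
    (g A B : ι → ℝ) (hg : ∀ i ∈ s, 0 < g i) (hB : ∀ i ∈ s, 0 < B i)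
    (N D : ℝ) (hD : 0 < D)
    (hA : ∑ i ∈ s, g i * A i ≤ N) (hBsum : ∑ i ∈ s, g i * B i = D) :
    ∃ i ∈ s, A i / B i ≤ N / D := by
  by_contra h
  push_neg at h
  have key : ∀ i ∈ s, g i * (N / D * B i) < g i * A i := by
    intro i hi
    have h1 := h i hi
    rw [div_lt_div_iff₀ hD (hB i hi)] at h1
    have : N / D * B i < A i := by
      rw [div_mul_eq_mul_div, div_lt_iff₀ hD]
      linarith
    exact mul_lt_mul_of_pos_left this (hg i hi)
  have hlt := Finset.sum_lt_sum_of_nonempty hs key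
  have h2 : ∑ i ∈ s, g i * (N / D * B i) = N := by
    calc ∑ i ∈ s, g i * (N / D * B i) = ∑ i ∈ s, N / D * (g i * B i) := by
          exact Finset.sum_congr rfl fun i _ => by ring
      _ = N / D * ∑ i ∈ s, g i * B i := (Finset.mul_sum _ _ _).symm
      _ = N := by rw [hBsum]; field_simp
  rw [h2] at hlt
  exact absurd (lt_of_lt_of_le hlt hA) (lt_irrefl N)


/-- Line embedding: for a nonzero nonnegative `f` there is a nonempty `S ⊆ supp(f)` with
`φ(S) ≤ (Σ_e w_e max_{u,v ∈ e} |f_u − f_v|) / (Σ_u w_u f_u)`. -/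
theorem hypergraph_line_embedding {V : Type*} [Fintype V] [DecidableEq V]
    (H : WHypergraph V) (hw : ∀ v : V, 0 < H.wv v)
    (f : V → ℝ) (hf : f ≠ 0) (hfpos : ∀ u : V, 0 ≤ f u) :
    ∃ S : Finset V, S.Nonempty ∧ (∀ u ∈ S, f u ≠ 0) ∧
      H.phi S ≤
        (∑ e ∈ H.E, H.w e * sSup {x : ℝ | ∃ u ∈ e, ∃ v ∈ e, |f u - f v| = x}) /
          ∑ u : V, H.wv u * f u := by
  classical
  obtain ⟨u0, hu0⟩ : ∃ u, 0 < f u := by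
    by_contra h
    push_neg at h
    exact hf (funext fun u => le_antisymm (h u) (hfpos u))
  set P : Finset ℝ := (Finset.univ.image f).filter (fun x => 0 < x) with hPdef
  have hmemP : ∀ x : ℝ, x ∈ P ↔ (∃ u, f u = x) ∧ 0 < x := by
    intro x; simp [hPdef, Finset.mem_filter, Finset.mem_image]
  set L : List ℝ := P.sort (· ≤ ·) with hLdef
  set n : ℕ := L.length with hndef
  have hmemL : ∀ x, x ∈ L ↔ x ∈ P := fun x => Finset.mem_sort _
  set s : ℕ → ℝ := fun m => (0 :: L).getD m 0 with hsdef
  have hs0 : s 0 = 0 := rfl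
  have hlen : (0 :: L).length = n + 1 := by simp [hndef]
  have hsortedlt : (0 :: L).Pairwise (· < ·) := by
    refine List.pairwise_cons.mpr ⟨fun b hb => ?_, (Finset.sortedLT_sort P).pairwise⟩
    exact ((hmemP b).mp ((hmemL b).mp hb)).2
  have hsmono : ∀ i j : ℕ, i < j → j ≤ n → s i < s j := by
    intro i j hij hjn
    have hi : i < (0 :: L).length := by rw [hlen]; omega
    have hj : j < (0 :: L).length := by rw [hlen]; omega
    have h := List.pairwise_iff_getElem.mp hsortedlt i j hi hj hij
    have e1 : s i = (0 :: L)[i] := List.getD_eq_getElem _ _ hi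
    have e2 : s j = (0 :: L)[j] := List.getD_eq_getElem _ _ hj
    rw [e1, e2]; exact h
  have hsle : ∀ i j : ℕ, i ≤ j → j ≤ n → s i ≤ s j := by
    intro i j hij hjn
    rcases eq_or_lt_of_le hij with rfl | h
    · exact le_refl _
    · exact (hsmono i j h hjn).le
  have hsleinv : ∀ i j : ℕ, i ≤ n → j ≤ n → s i ≤ s j → i ≤ j := by
    intro i j hi hj hsij
    by_contra h
    push_neg at h
    exact absurd hsij (not_le.mpr (hsmono j i h hi))
  have hsgetL : ∀ k, ∀ hk : k < L.length, s (k + 1) = L[k] := by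
    intro k hk
    have hk1 : k + 1 < (0 :: L).length := by simp only [List.length_cons]; omega
    show (0 :: L).getD (k + 1) 0 = _
    rw [List.getD_eq_getElem _ _ hk1]
    simp
  have hsP : ∀ k, k < n → s (k + 1) ∈ P := by
    intro k hk
    rw [hsgetL k (hndef ▸ hk)]
    exact (hmemL _).mp (List.getElem_mem _)
  have claim : ∀ u : V, ∃ m, m ≤ n ∧ s m = f u ∧
      ∀ k, k < n → (s (k + 1) ≤ f u ↔ k < m) := by
    intro u
    rcases eq_or_lt_of_le (hfpos u) with h0 | h0
    · refine ⟨0, Nat.zero_le n, by rw [hs0, ← h0], fun k hk => ?_⟩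
      constructor
      · intro hle
        have hpos : 0 < s (k + 1) := ((hmemP _).mp (hsP k hk)).2
        rw [← h0] at hle
        exact absurd (lt_of_lt_of_le hpos hle) (lt_irrefl 0)
      · omega
    · have hPu : f u ∈ P := (hmemP _).mpr ⟨⟨u, rfl⟩, h0⟩
      obtain ⟨i, hi, hgi⟩ := List.mem_iff_getElem.mp ((hmemL _).mpr hPu)
      have hin : i < n := hi
      have hsi : s (i + 1) = f u := by rw [hsgetL i hi]; exact hgi
      refine ⟨i + 1, by omega, hsi, fun k hk => ?_⟩
      constructor
      · intro hle
        have := hsleinv (k + 1) (i + 1) (by omega) (by omega) (by rw [hsi]; exact hle)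
        omega
      · intro hlt
        have := hsle (k + 1) (i + 1) (by omega) (by omega)
        rw [hsi] at this
        exact this
  choose m hm1 hm2 hm3 using claim
  set S : ℕ → Finset V := fun k => Finset.univ.filter (fun u => s (k + 1) ≤ f u) with hSdef
  set g : ℕ → ℝ := fun k => s (k + 1) - s k with hgdef
  set A : ℕ → ℝ := fun k => ∑ e ∈ H.bdry (S k), H.w e with hAdef
  set B : ℕ → ℝ := fun k => H.wS (S k) with hBdef
  have hmemS : ∀ k u, u ∈ S k ↔ s (k + 1) ≤ f u := by
    intro k u; simp [hSdef]
  have hgpos : ∀ k ∈ Finset.range n, 0 < g k := by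
    intro k hk
    rw [Finset.mem_range] at hk
    exact sub_pos.mpr (hsmono k (k + 1) (Nat.lt_succ_self k) (by omega))
  have hSne : ∀ k, k < n → (S k).Nonempty := by
    intro k hk
    obtain ⟨⟨u, hu⟩, -⟩ := (hmemP _).mp (hsP k hk)
    exact ⟨u, (hmemS k u).mpr (le_of_eq hu.symm)⟩
  have hBpos : ∀ k ∈ Finset.range n, 0 < B k := by
    intro k hk
    rw [Finset.mem_range] at hk
    exact Finset.sum_pos (fun v _ => hw v) (hSne k hk)
  have hnpos : 0 < n := by
    have h1 : f u0 ∈ L := (hmemL _).mpr ((hmemP _).mpr ⟨⟨u0, rfl⟩, hu0⟩)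
    exact List.length_pos_of_mem h1
  have hfu_eq : ∀ u, f u = ∑ k ∈ Finset.range n, (if s (k + 1) ≤ f u then g k else 0) := by
    intro u
    have hfilt : (Finset.range n).filter (fun k => s (k + 1) ≤ f u) = Finset.range (m u) := by
      ext k
      simp only [Finset.mem_filter, Finset.mem_range]
      constructor
      · rintro ⟨hk, hle⟩; exact (hm3 u k hk).mp hle
      · intro hk
        have hkn : k < n := lt_of_lt_of_le hk (hm1 u)
        exact ⟨hkn, (hm3 u k hkn).mpr hk⟩
    calc f u = s (m u) - s 0 := by rw [hm2 u, hs0, sub_zero]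
      _ = ∑ k ∈ Finset.range (m u), (s (k + 1) - s k) := (Finset.sum_range_sub s (m u)).symm
      _ = ∑ k ∈ (Finset.range n).filter (fun k => s (k + 1) ≤ f u), g k := by rw [hfilt]
      _ = ∑ k ∈ Finset.range n, (if s (k + 1) ≤ f u then g k else 0) :=
          Finset.sum_filter _ _
  have hD : (∑ u : V, H.wv u * f u) = ∑ k ∈ Finset.range n, g k * B k := by
    calc ∑ u : V, H.wv u * f u
        = ∑ u : V, ∑ k ∈ Finset.range n, (if s (k + 1) ≤ f u then H.wv u * g k else 0) := by
          refine Finset.sum_congr rfl fun u _ => ?_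
          conv_lhs => rw [hfu_eq u]
          rw [Finset.mul_sum]
          exact Finset.sum_congr rfl fun k _ => by split <;> simp
      _ = ∑ k ∈ Finset.range n, ∑ u : V, (if s (k + 1) ≤ f u then H.wv u * g k else 0) :=
          Finset.sum_comm
      _ = ∑ k ∈ Finset.range n, g k * B k := by
          refine Finset.sum_congr rfl fun k _ => ?_
          rw [← Finset.sum_filter]
          show ∑ u ∈ Finset.univ.filter (fun u => s (k + 1) ≤ f u), H.wv u * g k
              = g k * H.wS (S k)
          rw [WHypergraph.wS, ← Finset.sum_mul]
          ring
  have hDpos : 0 < ∑ u : V, H.wv u * f u :=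
    Finset.sum_pos' (fun u _ => mul_nonneg (hw u).le (hfpos u))
      ⟨u0, Finset.mem_univ u0, mul_pos (hw u0) hu0⟩
  have hedge : ∀ e ∈ H.E, ∑ k ∈ Finset.range n, (if e ∈ H.bdry (S k) then g k else 0)
      ≤ sSup {x : ℝ | ∃ u ∈ e, ∃ v ∈ e, |f u - f v| = x} := by
    intro e he
    have hne := H.edge_nonempty e he
    obtain ⟨us, hus, hMs⟩ := Finset.exists_mem_eq_sup' hne f
    obtain ⟨vs, hvs, hms⟩ := Finset.exists_mem_eq_inf' hne f
    have hvu : f vs ≤ f us := by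
      rw [← hms]; exact Finset.inf'_le f hus
    have hmm_le : m vs ≤ m us :=
      hsleinv _ _ (hm1 vs) (hm1 us) (by rw [hm2, hm2]; exact hvu)
    have hfilt : (Finset.range n).filter (fun k => e ∈ H.bdry (S k))
        = Finset.Ico (m vs) (m us) := by
      ext k
      simp only [Finset.mem_filter, Finset.mem_range, Finset.mem_Ico]
      constructor
      · rintro ⟨hk, hb⟩
        rw [WHypergraph.bdry, Finset.mem_filter] at hb
        obtain ⟨-, ⟨u, hu⟩, ⟨v, hv⟩⟩ := hb
        rw [Finset.mem_inter] at hu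
        rw [Finset.mem_sdiff] at hv
        have hu2 : s (k + 1) ≤ f u := (hmemS k u).mp hu.2
        have hv2 : f v < s (k + 1) := by
          have := hv.2
          rw [hmemS k v] at this
          exact lt_of_not_ge this
        constructor
        · by_contra hc
          push_neg at hc
          have h1 : s (k + 1) ≤ f vs := (hm3 vs k hk).mpr hc
          have h2 : f vs ≤ f v := by rw [← hms]; exact Finset.inf'_le f hv.1
          linarith
        · have : s (k + 1) ≤ f us := le_trans hu2 (by rw [← hMs]; exact Finset.le_sup' f hu.1)
          exact (hm3 us k hk).mp this
      · rintro ⟨h1, h2⟩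
        have hk : k < n := lt_of_lt_of_le h2 (hm1 us)
        refine ⟨hk, ?_⟩
        rw [WHypergraph.bdry, Finset.mem_filter]
        refine ⟨he, ⟨us, ?_⟩, ⟨vs, ?_⟩⟩
        · rw [Finset.mem_inter]
          exact ⟨hus, (hmemS k us).mpr ((hm3 us k hk).mpr h2)⟩
        · rw [Finset.mem_sdiff]
          refine ⟨hvs, ?_⟩
          rw [hmemS k vs]
          intro hc
          exact absurd ((hm3 vs k hk).mp hc) (by omega)
    have hmemX : |f us - f vs| ∈ {x : ℝ | ∃ u ∈ e, ∃ v ∈ e, |f u - f v| = x} :=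
      ⟨us, hus, vs, hvs, rfl⟩
    have hfin : Set.Finite {x : ℝ | ∃ u ∈ e, ∃ v ∈ e, |f u - f v| = x} := by
      apply Set.Finite.subset (Set.finite_range (fun p : V × V => |f p.1 - f p.2|))
      rintro x ⟨u, hu, v, hv, rfl⟩
      exact ⟨(u, v), rfl⟩
    calc ∑ k ∈ Finset.range n, (if e ∈ H.bdry (S k) then g k else 0)
        = ∑ k ∈ (Finset.range n).filter (fun k => e ∈ H.bdry (S k)), g k :=
          (Finset.sum_filter _ _).symm
      _ = ∑ k ∈ Finset.Ico (m vs) (m us), (s (k + 1) - s k) := by rw [hfilt]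
      _ = s (m us) - s (m vs) := by
          rw [Finset.sum_Ico_eq_sub _ hmm_le, Finset.sum_range_sub s, Finset.sum_range_sub s]
          ring
      _ = f us - f vs := by rw [hm2, hm2]
      _ ≤ |f us - f vs| := le_abs_self _
      _ ≤ _ := le_csSup hfin.bddAbove hmemX
  have hbdry_filter : ∀ k, H.E.filter (fun e => e ∈ H.bdry (S k)) = H.bdry (S k) := by
    intro k
    ext e
    simp only [WHypergraph.bdry, Finset.mem_filter]
    tauto
  have hNum : ∑ k ∈ Finset.range n, g k * A k
      ≤ ∑ e ∈ H.E, H.w e * sSup {x : ℝ | ∃ u ∈ e, ∃ v ∈ e, |f u - f v| = x} := by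
    calc ∑ k ∈ Finset.range n, g k * A k
        = ∑ k ∈ Finset.range n, ∑ e ∈ H.E, (if e ∈ H.bdry (S k) then g k * H.w e else 0) := by
          refine Finset.sum_congr rfl fun k _ => ?_
          rw [← Finset.sum_filter, hbdry_filter k]
          show g k * ∑ e ∈ H.bdry (S k), H.w e = _
          rw [Finset.mul_sum]
      _ = ∑ e ∈ H.E, ∑ k ∈ Finset.range n, (if e ∈ H.bdry (S k) then g k * H.w e else 0) :=
          Finset.sum_comm
      _ = ∑ e ∈ H.E, H.w e * ∑ k ∈ Finset.range n, (if e ∈ H.bdry (S k) then g k else 0) := by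
          refine Finset.sum_congr rfl fun e _ => ?_
          rw [Finset.mul_sum]
          exact Finset.sum_congr rfl fun k _ => by split <;> ring
      _ ≤ _ := Finset.sum_le_sum fun e he =>
          mul_le_mul_of_nonneg_left (hedge e he) (H.w_pos e he).le
  obtain ⟨k, hk, hratio⟩ := avg_ratio (Finset.range n)
    (Finset.nonempty_range_iff.mpr (Nat.pos_iff_ne_zero.mp hnpos)) g A B hgpos hBpos
    _ _ hDpos hNum hD.symm
  rw [Finset.mem_range] at hk
  refine ⟨S k, hSne k hk, ?_, ?_⟩
  · intro u hu
    have h1 : s (k + 1) ≤ f u := (hmemS k u).mp hu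
    have h2 : 0 < s (k + 1) := ((hmemP _).mp (hsP k hk)).2
    exact ne_of_gt (lt_of_lt_of_le h2 h1)
  · exact hratio
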